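/- arXiv:2012.04093 — 10 statements merged into one kernel-verified Lean document; each statement's English description precedes it below -/
import Mathlib

section
/- For every n : ℕ, the operation Fadd n makes the level-n set a commutative monoid with identity E^[n] 0: for all a, b, c in Set.range (E^[n]), one has Fadd n a b ∈ Set.range (E^[n]), Fadd n a (E^[n] 0) = a, Fadd n (E^[n] 0) a = a, Fadd n a b = Fadd n b a, and Fadd n a (Fadd n b c) = Fadd n (Fadd n a b) c. (This is the additive part of the paper's Theorem that the level-n set with F_n and F_{n+1} is a commutative semiring.) -/
/-- The exponential function `E a = w ^ a` on ℕ, for a fixed base `w`. -/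
def E (w : ℕ) (a : ℕ) : ℕ := w ^ a

/-- Bennett's commutative hyperoperation `F_n` (level-`n` addition):
`Fadd w n a b = E^[n] (L^[n] a + L^[n] b)` where `L = Nat.log w`. -/
def Fadd (w : ℕ) (n : ℕ) (a b : ℕ) : ℕ :=
  (E w)^[n] ((Nat.log w)^[n] a + (Nat.log w)^[n] b)

/-- Bennett's commutative hyperoperation `F_{n+1}` (level-`n` multiplication):
`Fmul w n a b = E^[n] (L^[n] a * L^[n] b)` where `L = Nat.log w`. -/
def Fmul (w : ℕ) (n : ℕ) (a b : ℕ) : ℕ :=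
  (E w)^[n] ((Nat.log w)^[n] a * (Nat.log w)^[n] b)


lemma logE (w : ℕ) (hw : 2 ≤ w) (n x : ℕ) :
    (Nat.log w)^[n] ((E w)^[n] x) = x := by
  induction n generalizing x with
  | zero => rfl
  | succ n ih =>
    rw [Function.iterate_succ_apply, Function.iterate_succ_apply',
      show E w ((E w)^[n] x) = w ^ ((E w)^[n] x) from rfl,
      Nat.log_pow (by omega), ih]

/-- The level-`n` set with `Fadd n` is a commutative monoid with identity `E^[n] 0`. -/
theorem Fadd_comm_monoid (w : ℕ) (hw : 2 ≤ w) (n : ℕ) :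
    ∀ a ∈ Set.range ((E w)^[n]), ∀ b ∈ Set.range ((E w)^[n]),
      ∀ c ∈ Set.range ((E w)^[n]),
      Fadd w n a b ∈ Set.range ((E w)^[n]) ∧
      Fadd w n a ((E w)^[n] 0) = a ∧
      Fadd w n ((E w)^[n] 0) a = a ∧
      Fadd w n a b = Fadd w n b a ∧
      Fadd w n a (Fadd w n b c) = Fadd w n (Fadd w n a b) c := by
  rintro a ⟨x, rfl⟩ b ⟨y, rfl⟩ c ⟨z, rfl⟩
  simp only [Fadd, logE w hw]
  exact ⟨⟨x + y, rfl⟩, by rw [add_zero], by rw [zero_add], by rw [add_comm],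
    by rw [add_assoc]⟩
end

section
/- For every n : ℕ, the operation Fmul n makes the level-n set a commutative monoid with identity E^[n] 1: for all a, b, c in Set.range (E^[n]), one has Fmul n a b ∈ Set.range (E^[n]), Fmul n a (E^[n] 1) = a, Fmul n (E^[n] 1) a = a, Fmul n a b = Fmul n b a, and Fmul n a (Fmul n b c) = Fmul n (Fmul n a b) c. (This is the multiplicative part of the paper's Theorem that the level-n set with F_n and F_{n+1} is a commutative semiring.) -/
/-- The level-`n` set with `Fmul n` is a commutative monoid with identity `E^[n] 1`. -/
theorem Fmul_comm_monoid (w : ℕ) (hw : 2 ≤ w) (n : ℕ) :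
    ∀ a ∈ Set.range ((E w)^[n]), ∀ b ∈ Set.range ((E w)^[n]),
      ∀ c ∈ Set.range ((E w)^[n]),
      Fmul w n a b ∈ Set.range ((E w)^[n]) ∧
      Fmul w n a ((E w)^[n] 1) = a ∧
      Fmul w n ((E w)^[n] 1) a = a ∧
      Fmul w n a b = Fmul w n b a ∧
      Fmul w n a (Fmul w n b c) = Fmul w n (Fmul w n a b) c := by
  rintro a ⟨x, rfl⟩ b ⟨y, rfl⟩ c ⟨z, rfl⟩
  simp only [Fmul, logE w hw]
  exact ⟨⟨_, rfl⟩, by rw [mul_one], by rw [one_mul], by rw [mul_comm], by rw [mul_assoc]⟩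
end

section
/- For every n : ℕ and all a, b, c in the level-n set Set.range (E^[n]), the operation Fmul n distributes over Fadd n: Fmul n a (Fadd n b c) = Fadd n (Fmul n a b) (Fmul n a c). (This is the distributivity part of the paper's Theorem that the level-n set with F_n and F_{n+1} is a commutative semiring.) -/
lemma log_E (w : ℕ) (hw : 2 ≤ w) : Function.LeftInverse (Nat.log w) (E w) := fun a =>
  Nat.log_pow (by omega) a

lemma logn_En (w : ℕ) (hw : 2 ≤ w) (n : ℕ) :
    Function.LeftInverse ((Nat.log w)^[n]) ((E w)^[n]) :=
  (log_E w hw).iterate n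

/-- On the level-`n` set, `Fmul n` distributes over `Fadd n`. -/
theorem Fmul_distrib_Fadd (w : ℕ) (hw : 2 ≤ w) (n : ℕ) :
    ∀ a ∈ Set.range ((E w)^[n]), ∀ b ∈ Set.range ((E w)^[n]),
      ∀ c ∈ Set.range ((E w)^[n]),
      Fmul w n a (Fadd w n b c) = Fadd w n (Fmul w n a b) (Fmul w n a c) := by
  rintro a ⟨x, rfl⟩ b ⟨y, rfl⟩ c ⟨z, rfl⟩
  have h := logn_En w hw n
  simp only [Fmul, Fadd, h _, mul_add]
end

section
/- For every n : ℕ and all a, b in the level-(n+1) set Set.range (E^[n+1]), the orderings at consecutive levels agree: a <_n b if and only if a <_{n+1} b. Explicitly, (there exists c ∈ Set.range (E^[n]) with c ≠ E^[n] 0 and Fadd n a c = b) if and only if (there exists c ∈ Set.range (E^[n+1]) with c ≠ E^[n+1] 0 and Fadd (n+1) a c = b). -/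
/-- For `a`, `b` in the level-`(n+1)` set, the orderings `<_n` and `<_{n+1}` agree. -/
theorem lt_level_succ_iff (w : ℕ) (hw : 2 ≤ w) (n : ℕ) :
    ∀ a ∈ Set.range ((E w)^[n+1]), ∀ b ∈ Set.range ((E w)^[n+1]),
      ((∃ c ∈ Set.range ((E w)^[n]), c ≠ (E w)^[n] 0 ∧ Fadd w n a c = b) ↔
       (∃ c ∈ Set.range ((E w)^[n+1]), c ≠ (E w)^[n+1] 0 ∧
          Fadd w (n+1) a c = b)) := by
  have hw1 : 1 < w := hw
  have hLI : Function.LeftInverse (Nat.log w) (E w) := fun x => Nat.log_pow hw1 x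
  have hLIn : ∀ m, Function.LeftInverse ((Nat.log w)^[m]) ((E w)^[m]) :=
    fun m => hLI.iterate m
  have hinj : ∀ m, Function.Injective ((E w)^[m]) := fun m => (hLIn m).injective
  rintro a ⟨α, rfl⟩ b ⟨β, rfl⟩
  have hEn1 : ∀ x, (E w)^[n+1] x = (E w)^[n] (w ^ x) := fun x =>
    Function.iterate_succ_apply (E w) n x
  constructor
  · rintro ⟨c, ⟨γ, rfl⟩, hc0, hadd⟩
    have hγ : γ ≠ 0 := fun h => hc0 (by rw [h])
    have h1 : (E w)^[n] (w ^ α + γ) = (E w)^[n] (w ^ β) := by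
      unfold Fadd at hadd
      rw [hEn1 α, hEn1 β, (hLIn n) (w^α), (hLIn n) γ] at *
      simpa [hEn1 β] using hadd
    have h2 : w ^ α + γ = w ^ β := hinj n h1
    have hαβ : α < β := by
      have : w ^ α < w ^ β := by omega
      exact (Nat.pow_lt_pow_iff_right hw1).mp this
    refine ⟨(E w)^[n+1] (β - α), ⟨β - α, rfl⟩, ?_, ?_⟩
    · intro h
      have := hinj (n+1) h
      omega
    · unfold Fadd
      rw [(hLIn (n+1)) α, (hLIn (n+1)) (β - α)]
      congr 1
      omega
  · rintro ⟨c, ⟨δ, rfl⟩, hc0, hadd⟩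
    have hδ : δ ≠ 0 := fun h => hc0 (by rw [h])
    have h1 : (E w)^[n+1] (α + δ) = (E w)^[n+1] β := by
      unfold Fadd at hadd
      rwa [(hLIn (n+1)) α, (hLIn (n+1)) δ] at hadd
    have h2 : α + δ = β := hinj (n+1) h1
    have hαβ : α < β := by omega
    have hpow : w ^ α < w ^ β := Nat.pow_lt_pow_right hw1 hαβ
    refine ⟨(E w)^[n] (w ^ β - w ^ α), ⟨_, rfl⟩, ?_, ?_⟩
    · intro h
      have := hinj n h
      omega
    · unfold Fadd
      rw [hEn1 α, (hLIn n) (w ^ α), (hLIn n) (w ^ β - w ^ α), hEn1 β]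
      congr 1
      omega
end

section
/- For every n : ℕ, every a in the level-n set Set.range (E^[n]), and every k : ℕ, iterating the level-n successor S_n (where S_n c = E^[n] (L^[n] c + 1)) k times starting from a yields Fadd n a (E^[n] k); that is, (fun c => E^[n] (L^[n] c + 1))^[k] a = Fadd n a (E^[n] k). (This encodes the paper's Proposition that the regular hyperoperation a [n:1] b built from the successor S_n coincides with the commutative hyperoperation F_n(a,b).) -/
lemma log_iter_exp_iter (w : ℕ) (hw : 2 ≤ w) (n : ℕ) :
    ∀ x, (Nat.log w)^[n] ((E w)^[n] x) = x := by
  induction n with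
  | zero => intro x; simp
  | succ n ih =>
    intro x
    rw [Function.iterate_succ_apply' (E w), Function.iterate_succ_apply (Nat.log w)]
    have : Nat.log w (E w ((E w)^[n] x)) = (E w)^[n] x := Nat.log_pow hw _
    rw [this, ih]

/-- Iterating the level-`n` successor `S_n c = E^[n] (L^[n] c + 1)` `k` times starting
from a level-`n` element `a` yields `Fadd n a (E^[n] k)`. -/
theorem succ_iterate_eq_Fadd (w : ℕ) (hw : 2 ≤ w) (n : ℕ) :
    ∀ a ∈ Set.range ((E w)^[n]), ∀ k : ℕ,
      (fun c => (E w)^[n] ((Nat.log w)^[n] c + 1))^[k] a = Fadd w n a ((E w)^[n] k) := by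
  rintro a ⟨m, rfl⟩ k
  induction k with
  | zero =>
    simp [Fadd, log_iter_exp_iter w hw n]
  | succ k ih =>
    rw [Function.iterate_succ_apply', ih, Fadd, Fadd,
      log_iter_exp_iter w hw n, log_iter_exp_iter w hw n, log_iter_exp_iter w hw n,
      log_iter_exp_iter w hw n]
    ring_nf
end

section
/- For every n : ℕ, every a in the level-n set Set.range (E^[n]), and every k : ℕ, iterating the map c ↦ Fadd n a c k times starting from the additive identity E^[n] 0 yields Fmul n a (E^[n] k); that is, (fun c => Fadd n a c)^[k] (E^[n] 0) = Fmul n a (E^[n] k). (This encodes the paper's Corollary that the regular hyperoperation a [n:2] b built from the successor S_n coincides with the commutative hyperoperation F_{n+1}(a,b).) -/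
/-- Iterating `c ↦ Fadd n a c` `k` times from the additive identity `E^[n] 0`
yields `Fmul n a (E^[n] k)`. -/
theorem Fadd_iterate_eq_Fmul (w : ℕ) (hw : 2 ≤ w) (n : ℕ) :
    ∀ a ∈ Set.range ((E w)^[n]), ∀ k : ℕ,
      (fun c => Fadd w n a c)^[k] ((E w)^[n] 0) = Fmul w n a ((E w)^[n] k) := by
  have hLE : ∀ x, (Nat.log w)^[n] ((E w)^[n] x) = x := by
    induction n with
    | zero => intro x; simp
    | succ m ih =>
      intro x
      rw [Function.iterate_succ_apply' (Nat.log w) m,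
        Function.iterate_succ_apply (E w) m, ih (E w x)]
      exact Nat.log_pow (by omega) x
  rintro a ⟨m, rfl⟩ k
  induction k with
  | zero => simp [Fmul, hLE, Nat.mul_zero]
  | succ k ih =>
    rw [Function.iterate_succ_apply', ih]
    simp only [Fadd, Fmul, hLE]
    congr 1
    ring
end

section
/- For every n : ℕ and all a, b in the level-(n+1) set Set.range (E^[n+1]), level-n multiplication coincides with level-(n+1) addition: Fmul n a b = Fadd (n+1) a b. (This is the paper's Proposition that a [n:2] b = a [n+1:1] b for a, b in the (n+1)-st level set.) -/
lemma log_iter_E_iter (w : ℕ) (hw : 2 ≤ w) (n : ℕ) (x : ℕ) :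
    (Nat.log w)^[n] ((E w)^[n] x) = x := by
  induction n generalizing x with
  | zero => rfl
  | succ k ih =>
    rw [Function.iterate_succ_apply (E w), Function.iterate_succ_apply' (Nat.log w), ih,
      E, Nat.log_pow hw]

/-- For `a`, `b` in the level-`(n+1)` set, level-`n` multiplication coincides with
level-`(n+1)` addition. -/
theorem Fmul_eq_Fadd_succ (w : ℕ) (hw : 2 ≤ w) (n : ℕ) :
    ∀ a ∈ Set.range ((E w)^[n+1]), ∀ b ∈ Set.range ((E w)^[n+1]),
      Fmul w n a b = Fadd w (n+1) a b := by
  rintro a ⟨x, rfl⟩ b ⟨y, rfl⟩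
  have h1 : ∀ z : ℕ, (Nat.log w)^[n] ((E w)^[n+1] z) = w ^ z := by
    intro z
    rw [Function.iterate_succ_apply (E w), log_iter_E_iter w hw n]
    rfl
  have h2 : ∀ z : ℕ, (Nat.log w)^[n+1] ((E w)^[n+1] z) = z :=
    log_iter_E_iter w hw (n+1)
  rw [Fmul, Fadd, h1, h1, h2, h2, ← pow_add, Function.iterate_succ_apply]
  rfl
end

section
/- For every n : ℕ and all x, y, u, v ∈ Set.range (E^[n]): Fadd n x v = Fadd n y u if and only if Fadd (n+1) (w ^ x) (w ^ v) = Fadd (n+1) (w ^ y) (w ^ u). (This is the paper's Proposition that (x,y) □_n (u,v) iff (E x, E y) □_{n+1} (E u, E v), showing that E generates an isomorphism between consecutive difference-class groups.) -/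
lemma Fadd_succ_exp (w : ℕ) (hw : 2 ≤ w) (n a b : ℕ) :
    Fadd w (n+1) (w ^ a) (w ^ b) = E w (Fadd w n a b) := by
  unfold Fadd
  rw [Function.iterate_succ_apply (Nat.log w), Function.iterate_succ_apply (Nat.log w),
    Function.iterate_succ_apply' (E w), Nat.log_pow hw, Nat.log_pow hw]

lemma E_inj (w : ℕ) (hw : 2 ≤ w) : Function.Injective (E w) :=
  Nat.pow_right_injective hw

/-- `(x,y) □_n (u,v)` iff `(E x, E y) □_{n+1} (E u, E v)`. -/
theorem square_rel_iff_exp (w : ℕ) (hw : 2 ≤ w) (n : ℕ) :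
    ∀ x ∈ Set.range ((E w)^[n]), ∀ y ∈ Set.range ((E w)^[n]),
    ∀ u ∈ Set.range ((E w)^[n]), ∀ v ∈ Set.range ((E w)^[n]),
      (Fadd w n x v = Fadd w n y u ↔
       Fadd w (n+1) (w ^ x) (w ^ v) = Fadd w (n+1) (w ^ y) (w ^ u)) := by
  intro x _ y _ u _ v _
  rw [Fadd_succ_exp w hw, Fadd_succ_exp w hw]
  exact ⟨fun h => h ▸ rfl, fun h => E_inj w hw h⟩
end

section
/- For every n : ℕ and all x, y, u, v ∈ Set.range (E^[n]): Fmul n x v = Fmul n y u if and only if Fmul (n+1) (w ^ x) (w ^ v) = Fmul (n+1) (w ^ y) (w ^ u). (This is the content, for nonnegative representatives, of the paper's Proposition that (x,y) ⊠_n (u,v) iff (E x, E y) ⊠_{n+1} (E u, E v), showing that E generates an isomorphism between consecutive quotient fields.) -/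
theorem Fmul_succ_exp (w : ℕ) (hw : 2 ≤ w) (n a b : ℕ) :
    Fmul w (n+1) (w ^ a) (w ^ b) = E w (Fmul w n a b) := by
  have hlog : ∀ m : ℕ, Nat.log w (w ^ m) = m := fun m => Nat.log_pow hw m
  simp only [Fmul, Function.iterate_succ_apply, hlog]
  rw [← Function.iterate_succ_apply, Function.iterate_succ_apply']

/-- `(x,y) ⊠_n (u,v)` iff `(E x, E y) ⊠_{n+1} (E u, E v)` for nonnegative
representatives. -/
theorem boxtimes_rel_iff_exp (w : ℕ) (hw : 2 ≤ w) (n : ℕ) :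
    ∀ x ∈ Set.range ((E w)^[n]), ∀ y ∈ Set.range ((E w)^[n]),
    ∀ u ∈ Set.range ((E w)^[n]), ∀ v ∈ Set.range ((E w)^[n]),
      (Fmul w n x v = Fmul w n y u ↔
       Fmul w (n+1) (w ^ x) (w ^ v) = Fmul w (n+1) (w ^ y) (w ^ u)) := by
  intro x _ y _ u _ v _
  rw [Fmul_succ_exp w hw, Fmul_succ_exp w hw]
  exact ⟨fun h => by rw [h], fun h => Nat.pow_right_injective hw h⟩
end

section
/- For every n : ℕ, the level-(n+1) real set is the set of elements of the level-n real set lying strictly above the level-n additive identity: Set.range (expω^[n+1]) = {x ∈ Set.range (expω^[n]) | expω^[n] 0 < x}. In particular ℝ_{n+1} = ℝ_n⁺. -/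
/-- The real exponential function base `ω`: `expω ω x = ω ^ x` (real rpow). -/
noncomputable def expω (ω : ℝ) (x : ℝ) : ℝ := ω ^ x

/-- The real logarithm base `ω`. -/
noncomputable def logω (ω : ℝ) (x : ℝ) : ℝ := Real.logb ω x

/-- The embedded commutative hyperoperation `•_n` (level-`n` addition) on ℝ. -/
noncomputable def badd (ω : ℝ) (n : ℕ) (a b : ℝ) : ℝ :=
  (expω ω)^[n] ((logω ω)^[n] a + (logω ω)^[n] b)

/-- The embedded commutative hyperoperation `•_{n+1}` (level-`n` multiplication) on ℝ. -/
noncomputable def bmul (ω : ℝ) (n : ℕ) (a b : ℝ) : ℝ :=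
  (expω ω)^[n] ((logω ω)^[n] a * (logω ω)^[n] b)

/-- The level-`(n+1)` real set consists of the elements of the level-`n` real set
lying strictly above the level-`n` additive identity: `ℝ_{n+1} = ℝ_n⁺`. -/
theorem level_real_succ_eq_pos (ω : ℝ) (hω : 1 < ω) (n : ℕ) :
    Set.range ((expω ω)^[n+1]) =
      {x ∈ Set.range ((expω ω)^[n]) | (expω ω)^[n] 0 < x} := by
  have hω0 : (0:ℝ) < ω := lt_trans zero_lt_one hω
  have hsm : StrictMono (expω ω) := fun a b h => by
    simpa [expω] using (Real.rpow_lt_rpow_left_iff hω).2 h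
  have hsmn : StrictMono ((expω ω)^[n]) := hsm.iterate n
  ext x
  constructor
  · rintro ⟨y, rfl⟩
    rw [Function.iterate_succ_apply]
    exact ⟨⟨expω ω y, rfl⟩, hsmn (Real.rpow_pos_of_pos hω0 y)⟩
  · rintro ⟨⟨y, rfl⟩, h⟩
    have hy : 0 < y := hsmn.lt_iff_lt.mp h
    refine ⟨Real.logb ω y, ?_⟩
    rw [Function.iterate_succ_apply]
    congr 1
    exact Real.rpow_logb hω0 (ne_of_gt hω) hy
end
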